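/- Let ξ₁,...,ξₙ be independent centered random variables with |ξᵢ| ≤ 1 almost surely, and σ² = ∑ᵢ E[ξᵢ²]. Then for all λ ≥ 0, B_n(λ) = ∑ᵢ E[ξᵢe^{λξᵢ}]/E[e^{λξᵢ}] ≥ (1 − e^{−λ})·e^{−λ²/2}·σ². -/

import Mathlib

open MeasureTheory ProbabilityTheory Real

private lemma exp_combo (x y a b : ℝ) (ha : 0 ≤ a) (hb : 0 ≤ b) (hab : a + b = 1) :
    Real.exp (a * x + b * y) ≤ a * Real.exp x + b * Real.exp y := by
  have := convexOn_exp.2 (Set.mem_univ x) (Set.mem_univ y) ha hb hab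
  simpa using this

private lemma key1 (l x : ℝ) (hl : 0 ≤ l) (hx : |x| ≤ 1) :
    x + (1 - Real.exp (-l)) * x ^ 2 ≤ x * Real.exp (l * x) := by
  obtain ⟨hx1, hx2⟩ := abs_le.1 hx
  rcases le_or_gt 0 x with hx0 | hx0
  · have h1 : l * x + 1 ≤ Real.exp (l * x) := Real.add_one_le_exp _
    have h2 : -l + 1 ≤ Real.exp (-l) := Real.add_one_le_exp _
    nlinarith [mul_nonneg hx0 hx0, sq_nonneg x, mul_le_mul_of_nonneg_left h1 hx0]
  · have hconv : Real.exp (l * x) ≤ (1 + x) * Real.exp 0 + (-x) * Real.exp (-l) := by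
      have := exp_combo 0 (-l) (1 + x) (-x) (by linarith) (by linarith) (by ring)
      have heq : (1 + x) * 0 + (-x) * (-l) = l * x := by ring
      rwa [heq] at this
    rw [Real.exp_zero] at hconv
    nlinarith [mul_nonneg (neg_nonneg.2 hx0.le) (sub_nonneg.2 hconv)]

private lemma key2 (l x : ℝ) (hx : |x| ≤ 1) :
    Real.exp (l * x) ≤ (1 - x) / 2 * Real.exp (-l) + (1 + x) / 2 * Real.exp l := by
  obtain ⟨hx1, hx2⟩ := abs_le.1 hx
  have := exp_combo (-l) l ((1 - x) / 2) ((1 + x) / 2) (by linarith) (by linarith) (by ring)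
  have heq : (1 - x) / 2 * (-l) + (1 + x) / 2 * l = l * x := by ring
  rwa [heq] at this

/-- Lower bound on the tilted mean for sums of independent centered random
variables with `|ξᵢ| ≤ 1`. -/
theorem tilted_mean_lower_bound_two_sided {Ω : Type*} [MeasurableSpace Ω] (μ : Measure Ω)
    [IsProbabilityMeasure μ] (n : ℕ) (ξ : Fin n → Ω → ℝ)
    (hmeas : ∀ i, Measurable (ξ i))
    (hindep : iIndepFun ξ μ)
    (hint : ∀ i, Integrable (ξ i) μ) (hmean : ∀ i, ∫ ω, ξ i ω ∂μ = 0)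
    (hbdd : ∀ i, ∀ᵐ ω ∂μ, |ξ i ω| ≤ 1) :
    ∀ l : ℝ, 0 ≤ l →
      (1 - Real.exp (-l)) * Real.exp (-l ^ 2 / 2) * (∑ i, ∫ ω, (ξ i ω) ^ 2 ∂μ)
        ≤ ∑ i, (∫ ω, ξ i ω * Real.exp (l * ξ i ω) ∂μ) / (∫ ω, Real.exp (l * ξ i ω) ∂μ) := by
  intro l hl
  rw [Finset.mul_sum]
  apply Finset.sum_le_sum
  intro i _
  have hb := hbdd i
  -- integrability facts
  have hIsq : Integrable (fun ω => ξ i ω ^ 2) μ := by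
    refine Integrable.mono' (integrable_const 1) ((hmeas i).pow_const 2).aestronglyMeasurable ?_
    filter_upwards [hb] with ω hω
    rw [Real.norm_eq_abs, abs_pow, sq_abs]
    nlinarith [abs_le.1 hω]
  have hIexp : Integrable (fun ω => Real.exp (l * ξ i ω)) μ := by
    refine Integrable.mono' (integrable_const (Real.exp l))
      (((hmeas i).const_mul l).exp).aestronglyMeasurable ?_
    filter_upwards [hb] with ω hω
    rw [Real.norm_eq_abs, abs_of_pos (Real.exp_pos _)]
    exact Real.exp_le_exp.2 (by nlinarith [abs_le.1 hω])
  have hImul : Integrable (fun ω => ξ i ω * Real.exp (l * ξ i ω)) μ := by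
    refine Integrable.mono' (integrable_const (Real.exp l))
      ((hmeas i).mul ((hmeas i).const_mul l).exp).aestronglyMeasurable ?_
    filter_upwards [hb] with ω hω
    rw [Real.norm_eq_abs, abs_mul, abs_of_pos (Real.exp_pos _)]
    calc |ξ i ω| * Real.exp (l * ξ i ω) ≤ 1 * Real.exp l := by
          apply mul_le_mul hω (Real.exp_le_exp.2 (by nlinarith [abs_le.1 hω]))
            (Real.exp_pos _).le zero_le_one
      _ = Real.exp l := one_mul _
  set A := ∫ ω, ξ i ω * Real.exp (l * ξ i ω) ∂μ
  set B := ∫ ω, Real.exp (l * ξ i ω) ∂μ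
  set V := ∫ ω, ξ i ω ^ 2 ∂μ
  have hV : 0 ≤ V := integral_nonneg fun ω => sq_nonneg _
  -- lower bound on A
  have hA : (1 - Real.exp (-l)) * V ≤ A := by
    have h1 : ∫ ω, (ξ i ω + (1 - Real.exp (-l)) * ξ i ω ^ 2) ∂μ ≤ A := by
      refine integral_mono_ae ((hint i).add (hIsq.const_mul _)) hImul ?_
      filter_upwards [hb] with ω hω
      exact key1 l (ξ i ω) hl hω
    rwa [integral_add (hint i) (hIsq.const_mul _), integral_const_mul, hmean i, zero_add] at h1
  have hAnn : 0 ≤ A :=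
    le_trans (mul_nonneg (by nlinarith [Real.exp_le_one_iff.2 (neg_nonpos.2 hl)]) hV) hA
  -- bounds on B
  have hBpos : 0 < B := by
    have h1 : ∫ (_ : Ω), Real.exp (-l) ∂μ ≤ B := by
      refine integral_mono_ae (integrable_const _) hIexp ?_
      filter_upwards [hb] with ω hω
      exact Real.exp_le_exp.2 (by nlinarith [abs_le.1 hω])
    have : ∫ (_ : Ω), Real.exp (-l) ∂μ = Real.exp (-l) := by simp
    linarith [Real.exp_pos (-l)]
  have hBle : B ≤ Real.exp (l ^ 2 / 2) := by
    have h1 : B ≤ ∫ ω, ((1 - ξ i ω) / 2 * Real.exp (-l) + (1 + ξ i ω) / 2 * Real.exp l) ∂μ := by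
      refine integral_mono_ae hIexp ?_ ?_
      · apply Integrable.add
        · exact (((integrable_const 1).sub (hint i)).div_const 2).mul_const _
        · exact (((integrable_const 1).add (hint i)).div_const 2).mul_const _
      · filter_upwards [hb] with ω hω
        exact key2 l (ξ i ω) hω
    have h2 : ∫ ω, ((1 - ξ i ω) / 2 * Real.exp (-l) + (1 + ξ i ω) / 2 * Real.exp l) ∂μ
        = Real.cosh l := by
      rw [integral_add, integral_mul_const, integral_mul_const, integral_div, integral_div,
        integral_sub (integrable_const 1) (hint i), integral_add (integrable_const 1) (hint i),
        hmean i, integral_const, Real.cosh_eq]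
      · simp; ring
      · exact (((integrable_const 1).sub (hint i)).div_const 2).mul_const _
      · exact (((integrable_const 1).add (hint i)).div_const 2).mul_const _
    calc B ≤ Real.cosh l := h2 ▸ h1
      _ ≤ Real.exp (l ^ 2 / 2) := Real.cosh_le_exp_half_sq l
  -- combine
  calc (1 - Real.exp (-l)) * Real.exp (-l ^ 2 / 2) * V
      = ((1 - Real.exp (-l)) * V) / Real.exp (l ^ 2 / 2) := by
        have hE : Real.exp (-l ^ 2 / 2) = (Real.exp (l ^ 2 / 2))⁻¹ := by
          rw [← Real.exp_neg]; congr 1; ring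
        rw [hE, div_eq_mul_inv]; ring
    _ ≤ A / B := div_le_div₀ hAnn hA hBpos hBle
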